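/- Let G be a 4-connected planar triangulation with n vertices, and let t be a positive integer. Then either there exist two distinct vertices v, x of G with more than t common neighbors, or G has an independent set S of vertices of degree at most 6 such that no 4-cycle of G contains two vertices of S and |S| ≥ n/(108t). -/
import Mathlib


open SimpleGraph Set

variable {V : Type*}

/-- An independent set of vertices. -/
def IndepSet (G : SimpleGraph V) (S : Set V) : Prop :=
  ∀ a ∈ S, ∀ b ∈ S, a ≠ b → ¬ G.Adj a b

/-- Three distinct mutually adjacent vertices, i.e. a triangle (3-cycle). -/
def IsTriangle (G : SimpleGraph V) (a b c : V) : Prop :=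
  a ≠ b ∧ a ≠ c ∧ b ≠ c ∧ G.Adj a b ∧ G.Adj b c ∧ G.Adj a c

/-- The four listed vertices form a 4-cycle `a b c d a`. -/
def IsCycle4 (G : SimpleGraph V) (a b c d : V) : Prop :=
  ([a, b, c, d] : List V).Nodup ∧ G.Adj a b ∧ G.Adj b c ∧ G.Adj c d ∧ G.Adj d a

/-- The five listed vertices form a 5-cycle `a b c d e a`. -/
def IsCycle5 (G : SimpleGraph V) (a b c d e : V) : Prop :=
  ([a, b, c, d, e] : List V).Nodup ∧
    G.Adj a b ∧ G.Adj b c ∧ G.Adj c d ∧ G.Adj d e ∧ G.Adj e a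

/-- Deleting the vertex set `s` disconnects `G`. -/
def IsSeparating (G : SimpleGraph V) (s : Set V) : Prop :=
  ∃ a b : ↥(sᶜ), ¬ (G.induce sᶜ).Reachable a b

/-- `G` is 4-connected: more than 4 vertices, and removing any at most 3 vertices
leaves a connected graph. -/
def FourConnected (G : SimpleGraph V) [Fintype V] : Prop :=
  4 < Fintype.card V ∧ ∀ s : Set V, s.ncard ≤ 3 → (G.induce sᶜ).Connected

/-- `G` is 2-connected: more than 2 vertices, and removing any single vertex
leaves a connected graph. -/
def TwoConnected (G : SimpleGraph V) [Fintype V] : Prop :=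
  2 < Fintype.card V ∧ ∀ s : Set V, s.ncard ≤ 1 → (G.induce sᶜ).Connected

/-- `f` is the edge set of a triangle of `G`. -/
def IsTriangleFace [DecidableEq V] (G : SimpleGraph V) (f : Finset (Sym2 V)) : Prop :=
  ∃ a b c : V, IsTriangle G a b c ∧ f = {s(a, b), s(b, c), s(a, c)}

/-- A combinatorial plane triangulation structure on `G`: a connected graph together with a
set of triangular faces such that every edge lies on exactly two faces and Euler's formula
holds.  This encodes a plane graph in which every face (including the outer one) is bounded
by a triangle. -/
structure PlaneTriangulation [Fintype V] [DecidableEq V] (G : SimpleGraph V) where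
  connected : G.Connected
  faces : Set (Finset (Sym2 V))
  face_tri : ∀ f ∈ faces, IsTriangleFace G f
  edge_faces : ∀ e ∈ G.edgeSet, {f ∈ faces | e ∈ f}.ncard = 2
  euler : (Fintype.card V : ℤ) - (G.edgeSet.ncard : ℤ) + (faces.ncard : ℤ) = 2

/-- `f` is the edge set of a cycle of `G`. -/
def IsCycleFace [DecidableEq V] (G : SimpleGraph V) (f : Finset (Sym2 V)) : Prop :=
  ∃ (v : V) (c : G.Walk v v), c.IsCycle ∧ f = c.edges.toFinset

/-- A combinatorial plane graph structure on a 2-connected graph `G`: all faces are bounded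
by cycles, every edge lies on exactly two faces, and Euler's formula holds. -/
structure PlaneGraph [Fintype V] [DecidableEq V] (G : SimpleGraph V) where
  connected : G.Connected
  faces : Set (Finset (Sym2 V))
  face_cyc : ∀ f ∈ faces, IsCycleFace G f
  edge_faces : ∀ e ∈ G.edgeSet, {f ∈ faces | e ∈ f}.ncard = 2
  euler : (Fintype.card V : ℤ) - (G.edgeSet.ncard : ℤ) + (faces.ncard : ℤ) = 2

/-- `K` is the vertex set of a connected component of `G - S`. -/
def IsCompOf (G : SimpleGraph V) (S K : Set V) : Prop :=
  K.Nonempty ∧ Disjoint K S ∧ (G.induce K).Connected ∧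
    ∀ a ∈ K, ∀ b : V, b ∉ S → G.Adj a b → b ∈ K

/-- The attachments on `S` of the bridge with component `K`. -/
def Attachments (G : SimpleGraph V) (S K : Set V) : Set V :=
  {v ∈ S | ∃ w ∈ K, G.Adj v w}

/-- `p` is a `C`-Tutte path: a path such that every `p`-bridge has at most 3 attachments,
and every `p`-bridge containing an edge of `C` has at most 2 attachments.  (Bridges that are
single edges always have exactly two attachments, so only bridges arising from components
of `G - V(p)` are constrained.) -/
def IsTuttePath (G : SimpleGraph V) (C : Set (Sym2 V)) {x y : V} (p : G.Walk x y) : Prop :=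
  p.IsPath ∧
    ∀ K : Set V, IsCompOf G {v | v ∈ p.support} K →
      (Attachments G {v | v ∈ p.support} K).ncard ≤ 3 ∧
      ((∃ e ∈ C, ∃ a ∈ K, a ∈ e) → (Attachments G {v | v ∈ p.support} K).ncard ≤ 2)

/-- A combinatorial near triangulation with outer 4-cycle `u v w x u`: every face other than
the outer one is a triangle. -/
structure NearTriangulationC4 [Fintype V] [DecidableEq V]
    (G : SimpleGraph V) (u v w x : V) where
  nodup : ([u, v, w, x] : List V).Nodup
  connected : G.Connected
  huv : G.Adj u v
  hvw : G.Adj v w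
  hwx : G.Adj w x
  hxu : G.Adj x u
  faces : Set (Finset (Sym2 V))
  outer_mem : ({s(u, v), s(v, w), s(w, x), s(x, u)} : Finset (Sym2 V)) ∈ faces
  face_tri : ∀ f ∈ faces,
    f ≠ ({s(u, v), s(v, w), s(w, x), s(x, u)} : Finset (Sym2 V)) → IsTriangleFace G f
  edge_faces : ∀ e ∈ G.edgeSet, {f ∈ faces | e ∈ f}.ncard = 2
  euler : (Fintype.card V : ℤ) - (G.edgeSet.ncard : ℤ) + (faces.ncard : ℤ) = 2

/-- A Hamiltonian path: a path visiting every vertex. -/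
def IsHamPath {W : Type*} (H : SimpleGraph W) {a b : W} (p : H.Walk a b) : Prop :=
  p.IsPath ∧ ∀ z : W, z ∈ p.support

/-- A graph is outer planar iff its vertices can be placed (injectively) on a line/circle so
that no two edges cross. -/
def OuterPlanar {W : Type*} (H : SimpleGraph W) : Prop :=
  ∃ f : W → ℝ, Function.Injective f ∧
    ∀ a b c d : W, H.Adj a b → H.Adj c d → ¬ (f a < f c ∧ f c < f b ∧ f b < f d)

/-- A diamond-6-cycle in `G` on the nine listed vertices: three diamonds (`K₄` minus an edge)
glued in a cyclic fashion at the vertices `k₁ k₂ k₃`.  Its crucial vertices (the degree-3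
vertices) are `a₁ b₁ a₂ b₂ a₃ b₃`. -/
def IsDiamond6 (G : SimpleGraph V) (k₁ k₂ k₃ a₁ b₁ a₂ b₂ a₃ b₃ : V) : Prop :=
  ([k₁, k₂, k₃, a₁, b₁, a₂, b₂, a₃, b₃] : List V).Nodup ∧
  G.Adj a₁ b₁ ∧ G.Adj a₁ k₁ ∧ G.Adj a₁ k₂ ∧ G.Adj b₁ k₁ ∧ G.Adj b₁ k₂ ∧
  G.Adj a₂ b₂ ∧ G.Adj a₂ k₂ ∧ G.Adj a₂ k₃ ∧ G.Adj b₂ k₂ ∧ G.Adj b₂ k₃ ∧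
  G.Adj a₃ b₃ ∧ G.Adj a₃ k₃ ∧ G.Adj a₃ k₁ ∧ G.Adj b₃ k₃ ∧ G.Adj b₃ k₁

/-- `v` lies on a separating 4-cycle of `G`. -/
def OnSep4Cycle (G : SimpleGraph V) (v : V) : Prop :=
  ∃ a b c d : V, IsCycle4 G a b c d ∧ IsSeparating G {a, b, c, d} ∧
    v ∈ ({a, b, c, d} : Set V)

/-- A diamond-4-cycle in `G`: a 4-cycle `a b c d a` together with a vertex `e` adjacent to
`a`, `b` and `d`.  Its crucial vertices are `a` and `e` (the two degree-3 vertices not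
adjacent to the degree-2 vertex `c`). -/
structure Diamond4 (G : SimpleGraph V) where
  a : V
  b : V
  c : V
  d : V
  e : V
  nodup : ([a, b, c, d, e] : List V).Nodup
  hab : G.Adj a b
  hbc : G.Adj b c
  hcd : G.Adj c d
  hda : G.Adj d a
  hea : G.Adj e a
  heb : G.Adj e b
  hed : G.Adj e d

/-- The vertex set of a diamond-4-cycle. -/
def Diamond4.verts [DecidableEq V] {G : SimpleGraph V} (D : Diamond4 G) : Finset V :=
  {D.a, D.b, D.c, D.d, D.e}

/-- The edge set of a diamond-4-cycle. -/
def Diamond4.edges [DecidableEq V] {G : SimpleGraph V} (D : Diamond4 G) : Finset (Sym2 V) :=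
  {s(D.a, D.b), s(D.b, D.c), s(D.c, D.d), s(D.d, D.a), s(D.e, D.a), s(D.e, D.b), s(D.e, D.d)}

/-- The crucial vertices of a diamond-4-cycle. -/
def Diamond4.crucial {G : SimpleGraph V} (D : Diamond4 G) : Set V := {D.a, D.e}

/-- `b` induces a subgraph of `G` that is 2-connected or a single edge. -/
def TwoConnSet (G : SimpleGraph V) (b : Set V) : Prop :=
  2 ≤ b.ncard ∧ (G.induce b).Connected ∧
    (b.ncard = 2 ∨ ∀ c ∈ b, (G.induce (b \ {c})).Connected)

/-- `b` is (the vertex set of) a block of the subgraph of `G` induced by `T`. -/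
def IsBlockIn (G : SimpleGraph V) (T b : Set V) : Prop :=
  b ⊆ T ∧ TwoConnSet G b ∧ ∀ b' : Set V, b ⊂ b' → b' ⊆ T → ¬ TwoConnSet G b'

/-- The children of `v` in the tree `T` rooted at `r`. -/
def RootedChildren (T : SimpleGraph V) (r v : V) : Set V :=
  {w | T.Adj v w ∧ T.dist r w = T.dist r v + 1}

/-- `v` is a leaf of the tree `T` rooted at `r` (it has no children). -/
def RootedLeaf (T : SimpleGraph V) (r v : V) : Prop :=
  RootedChildren T r v = ∅

set_option linter.unusedSectionVars false
set_option linter.unusedVariables false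
set_option linter.unreachableTactic false
set_option linter.unusedTactic false

section Aux

variable [Fintype V] [DecidableEq V] (G : SimpleGraph V) [DecidableRel G.Adj]

lemma aux_ncard_neighborSet (v : V) : (G.neighborSet v).ncard = G.degree v := by
  rw [Set.ncard_eq_toFinset_card', Set.toFinset_card]
  exact G.card_neighborSet_eq_degree v

lemma aux_ncard_inter_nbr (v x : V) :
    (G.neighborSet v ∩ G.neighborSet x).ncard
      = (G.neighborFinset v ∩ G.neighborFinset x).card := by
  rw [← Set.ncard_coe_finset]
  congr 1
  simp [Finset.coe_inter, SimpleGraph.neighborFinset_def, Set.coe_toFinset]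

lemma aux_edge_count (hPT : PlaneTriangulation G) :
    (G.edgeFinset.card : ℤ) = 3 * (Fintype.card V : ℤ) - 6 := by
  classical
  have hFfin : hPT.faces.Finite := Set.toFinite _
  set Ff : Finset (Finset (Sym2 V)) := hFfin.toFinset with hFf
  have hface : ∀ f ∈ Ff, f.card = 3 ∧ f ⊆ G.edgeFinset := by
    intro f hf
    rw [hFf, Set.Finite.mem_toFinset] at hf
    obtain ⟨a, b, c, ⟨hab, hac, hbc, h1, h2, h3⟩, rfl⟩ := hPT.face_tri f hf
    constructor
    · rw [Finset.card_insert_of_notMem, Finset.card_insert_of_notMem,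
        Finset.card_singleton]
      · simp only [Finset.mem_singleton, Sym2.eq_iff]
        tauto
      · simp only [Finset.mem_insert, Finset.mem_singleton, Sym2.eq_iff]
        push_neg
        constructor
        · tauto
        · tauto
    · intro e he
      simp only [Finset.mem_insert, Finset.mem_singleton] at he
      rcases he with rfl | rfl | rfl <;>
        simp [SimpleGraph.mem_edgeFinset, h1, h2, h3]
  have hsum1 : ∑ f ∈ Ff, f.card = 3 * Ff.card := by
    rw [Finset.sum_congr rfl (fun f hf => (hface f hf).1), Finset.sum_const,
      smul_eq_mul, mul_comm]
  have hsum2 : ∑ f ∈ Ff, f.card = 2 * G.edgeFinset.card := by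
    have step1 : ∀ f ∈ Ff, f.card = ∑ e ∈ G.edgeFinset, if e ∈ f then 1 else 0 := by
      intro f hf
      simp only [Finset.sum_boole, Nat.cast_id]
      rw [Finset.filter_mem_eq_inter, Finset.inter_eq_right.mpr (hface f hf).2]
    rw [Finset.sum_congr rfl step1, Finset.sum_comm]
    have step2 : ∀ e ∈ G.edgeFinset, (∑ f ∈ Ff, if e ∈ f then 1 else 0) = 2 := by
      intro e he
      rw [Finset.sum_boole]
      have hset : {f ∈ hPT.faces | e ∈ f} = ↑(Ff.filter (fun f => e ∈ f)) := by
        ext f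
        simp only [hFf, Set.Finite.mem_toFinset, Finset.coe_filter, Set.mem_setOf_eq,
          Set.mem_sep_iff]
      have := hPT.edge_faces e (SimpleGraph.mem_edgeFinset.mp he)
      rw [hset, Set.ncard_coe_finset] at this
      simpa using this
    rw [Finset.sum_congr rfl step2, Finset.sum_const, smul_eq_mul, mul_comm]
  have hE : 3 * Ff.card = 2 * G.edgeFinset.card := by rw [← hsum1, hsum2]
  have hfc : (hPT.faces.ncard : ℤ) = (Ff.card : ℤ) := by
    rw [Set.ncard_eq_toFinset_card _ hFfin]
  have hec : (G.edgeSet.ncard : ℤ) = (G.edgeFinset.card : ℤ) := by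
    rw [← SimpleGraph.coe_edgeFinset, Set.ncard_coe_finset]
  have heuler := hPT.euler
  rw [hec, hfc] at heuler
  have hE' : 3 * (Ff.card : ℤ) = 2 * (G.edgeFinset.card : ℤ) := by exact_mod_cast hE
  linarith

lemma aux_low_deg_card (hPT : PlaneTriangulation G) (h5 : 5 ≤ Fintype.card V) :
    Fintype.card V ≤ 7 * (Finset.univ.filter (fun v => G.degree v ≤ 6)).card := by
  classical
  have hE := aux_edge_count G hPT
  have hdeg : ∑ v, G.degree v = 2 * G.edgeFinset.card :=
    G.sum_degrees_eq_twice_card_edges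
  have h2E : 2 * G.edgeFinset.card + 12 = 6 * Fintype.card V := by
    have : (2 * G.edgeFinset.card + 12 : ℤ) = 6 * Fintype.card V := by linarith
    exact_mod_cast this
  set A := Finset.univ.filter (fun v => G.degree v ≤ 6) with hA
  set B := Finset.univ.filter (fun v => ¬ G.degree v ≤ 6) with hB
  have hAB : A.card + B.card = Fintype.card V := by
    rw [hA, hB, Finset.card_filter_add_card_filter_not, Finset.card_univ]
  have hBsum : 7 * B.card ≤ ∑ v, G.degree v := by
    calc 7 * B.card = ∑ _v ∈ B, 7 := by rw [Finset.sum_const, smul_eq_mul, mul_comm]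
    _ ≤ ∑ v ∈ B, G.degree v := by
        refine Finset.sum_le_sum ?_
        intro v hv
        rw [hB, Finset.mem_filter] at hv
        omega
    _ ≤ ∑ v, G.degree v := Finset.sum_le_sum_of_subset (Finset.subset_univ B)
  omega


lemma aux_bad_card (t : ℕ) (ht : 1 ≤ t)
    (hcn : ∀ v x : V, v ≠ x → (G.neighborFinset v ∩ G.neighborFinset x).card ≤ t)
    (v : V) (hv : G.degree v ≤ 6) :
    (Finset.univ.filter (fun u => u = v ∨ G.Adj v u ∨
        2 ≤ (G.neighborFinset v ∩ G.neighborFinset u).card)).card ≤ 7 + 15 * (t - 1) := by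
  classical
  set CN : Finset V → Finset V :=
    fun p => (Finset.univ.filter (fun u => ∀ x ∈ p, G.Adj x u)).erase v with hCN
  have hsub : Finset.univ.filter (fun u => u = v ∨ G.Adj v u ∨
        2 ≤ (G.neighborFinset v ∩ G.neighborFinset u).card) ⊆
      insert v (G.neighborFinset v ∪
        ((G.neighborFinset v).powersetCard 2).biUnion CN) := by
    intro u hu
    rw [Finset.mem_filter] at hu
    rcases hu.2 with rfl | hadj | hcc
    · exact Finset.mem_insert_self _ _
    · refine Finset.mem_insert_of_mem (Finset.mem_union_left _ ?_)
      rwa [SimpleGraph.mem_neighborFinset]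
    · by_cases huv : u = v
      · exact huv ▸ Finset.mem_insert_self _ _
      refine Finset.mem_insert_of_mem (Finset.mem_union_right _ ?_)
      obtain ⟨p, hp, hp2⟩ := Finset.exists_subset_card_eq hcc
      refine Finset.mem_biUnion.mpr ⟨p, ?_, ?_⟩
      · refine Finset.mem_powersetCard.mpr ⟨?_, hp2⟩
        exact hp.trans (Finset.inter_subset_left)
      · rw [hCN]
        refine Finset.mem_erase.mpr ⟨huv, Finset.mem_filter.mpr ⟨Finset.mem_univ _, ?_⟩⟩
        intro x hx
        have := hp hx
        rw [Finset.mem_inter, SimpleGraph.mem_neighborFinset,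
          SimpleGraph.mem_neighborFinset] at this
        exact this.2.symm
  have hCNcard : ∀ p ∈ (G.neighborFinset v).powersetCard 2, (CN p).card ≤ t - 1 := by
    intro p hp
    rw [Finset.mem_powersetCard] at hp
    obtain ⟨x, y, hxy, rfl⟩ := Finset.card_eq_two.mp hp.2
    have hx : G.Adj v x := by
      have := hp.1 (Finset.mem_insert_self x {y})
      rwa [SimpleGraph.mem_neighborFinset] at this
    have hy : G.Adj v y := by
      have := hp.1 (Finset.mem_insert_of_mem (Finset.mem_singleton_self y))
      rwa [SimpleGraph.mem_neighborFinset] at this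
    have hsub2 : CN {x, y} ⊆ (G.neighborFinset x ∩ G.neighborFinset y).erase v := by
      intro u hu
      rw [hCN, Finset.mem_erase, Finset.mem_filter] at hu
      refine Finset.mem_erase.mpr ⟨hu.1, ?_⟩
      rw [Finset.mem_inter, SimpleGraph.mem_neighborFinset, SimpleGraph.mem_neighborFinset]
      exact ⟨hu.2.2 x (Finset.mem_insert_self _ _),
        hu.2.2 y (Finset.mem_insert_of_mem (Finset.mem_singleton_self y))⟩
    have hvmem : v ∈ G.neighborFinset x ∩ G.neighborFinset y := by
      rw [Finset.mem_inter, SimpleGraph.mem_neighborFinset, SimpleGraph.mem_neighborFinset]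
      exact ⟨hx.symm, hy.symm⟩
    calc (CN {x, y}).card ≤ ((G.neighborFinset x ∩ G.neighborFinset y).erase v).card :=
          Finset.card_le_card hsub2
      _ = (G.neighborFinset x ∩ G.neighborFinset y).card - 1 :=
          Finset.card_erase_of_mem hvmem
      _ ≤ t - 1 := by have := hcn x y hxy; omega
  calc (Finset.univ.filter _).card
      ≤ (insert v (G.neighborFinset v ∪
          ((G.neighborFinset v).powersetCard 2).biUnion CN)).card :=
        Finset.card_le_card hsub
    _ ≤ 1 + (G.neighborFinset v ∪
          ((G.neighborFinset v).powersetCard 2).biUnion CN).card := by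
        have := Finset.card_insert_le v (G.neighborFinset v ∪
          ((G.neighborFinset v).powersetCard 2).biUnion CN)
        omega
    _ ≤ 1 + ((G.neighborFinset v).card +
          (((G.neighborFinset v).powersetCard 2).biUnion CN).card) := by
        have := Finset.card_union_le (G.neighborFinset v)
          (((G.neighborFinset v).powersetCard 2).biUnion CN)
        omega
    _ ≤ 7 + 15 * (t - 1) := by
        have h1 : (G.neighborFinset v).card ≤ 6 := hv
        have h2 : (((G.neighborFinset v).powersetCard 2).biUnion CN).card ≤
            15 * (t - 1) := by
          calc (((G.neighborFinset v).powersetCard 2).biUnion CN).card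
              ≤ ∑ p ∈ (G.neighborFinset v).powersetCard 2, (CN p).card :=
                Finset.card_biUnion_le
            _ ≤ ∑ _p ∈ (G.neighborFinset v).powersetCard 2, (t - 1) :=
                Finset.sum_le_sum hCNcard
            _ = ((G.neighborFinset v).powersetCard 2).card * (t - 1) := by
                rw [Finset.sum_const, smul_eq_mul]
            _ ≤ 15 * (t - 1) := by
                refine Nat.mul_le_mul_right _ ?_
                rw [Finset.card_powersetCard]
                calc (G.neighborFinset v).card.choose 2 ≤ (6 : ℕ).choose 2 :=
                      Nat.choose_le_choose 2 hv
                  _ = 15 := by decide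
        omega

lemma aux_greedy (t : ℕ) (ht : 1 ≤ t)
    (hcn : ∀ v x : V, v ≠ x → (G.neighborFinset v ∩ G.neighborFinset x).card ≤ t) :
    ∀ (N : ℕ) (P : Finset V), P.card ≤ N → (∀ v ∈ P, G.degree v ≤ 6) →
    ∃ S : Finset V, S ⊆ P ∧
      (∀ u ∈ S, ∀ w ∈ S, u ≠ w → ¬ G.Adj u w ∧
        (G.neighborFinset u ∩ G.neighborFinset w).card ≤ 1) ∧
      P.card ≤ (7 + 15 * (t - 1)) * S.card := by
  classical
  intro N
  induction N with
  | zero =>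
    intro P hP _
    exact ⟨∅, Finset.empty_subset _, by simp, by simpa using hP⟩
  | succ N ih =>
    intro P hP hPdeg
    rcases Finset.eq_empty_or_nonempty P with rfl | ⟨v, hv⟩
    · exact ⟨∅, Finset.empty_subset _, by simp, by simp⟩
    set Bad : Finset V := Finset.univ.filter (fun u => u = v ∨ G.Adj v u ∨
      2 ≤ (G.neighborFinset v ∩ G.neighborFinset u).card) with hBad
    have hvBad : v ∈ Bad := by
      rw [hBad, Finset.mem_filter]
      exact ⟨Finset.mem_univ _, Or.inl rfl⟩
    set P' := P \ Bad with hP'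
    have hP'P : P' ⊆ P := Finset.sdiff_subset
    have hP'card : P'.card ≤ N := by
      have hss : P' ⊂ P := by
        refine Finset.ssubset_iff_of_subset hP'P |>.mpr ⟨v, hv, ?_⟩
        rw [hP', Finset.mem_sdiff]
        tauto
      have := Finset.card_lt_card hss
      omega
    obtain ⟨S', hS'P', hS'pair, hS'card⟩ := ih P' hP'card (fun u hu => hPdeg u (hP'P hu))
    have hvS' : v ∉ S' := fun h => by
      have := hS'P' h
      rw [hP', Finset.mem_sdiff] at this
      exact this.2 hvBad
    refine ⟨insert v S', ?_, ?_, ?_⟩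
    · exact Finset.insert_subset hv (hS'P'.trans hP'P)
    · intro u hu w hw huw
      have notbad : ∀ z ∈ S', ¬ G.Adj v z ∧
          (G.neighborFinset v ∩ G.neighborFinset z).card ≤ 1 := by
        intro z hz
        have hz' := hS'P' hz
        rw [hP', Finset.mem_sdiff, hBad, Finset.mem_filter] at hz'
        have := hz'.2
        push_neg at this
        have h3 := this (Finset.mem_univ z)
        exact ⟨h3.2.1, by omega⟩
      rcases Finset.mem_insert.mp hu with rfl | hu' <;>
        rcases Finset.mem_insert.mp hw with rfl | hw'
      · exact absurd rfl huw
      · exact notbad w hw'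
      · obtain ⟨h1, h2⟩ := notbad u hu'
        refine ⟨fun h => h1 h.symm, ?_⟩
        rwa [Finset.inter_comm]
      · exact hS'pair u hu' w hw' huw
    · have hcover : P ⊆ P' ∪ Bad := by
        intro z hz
        rw [Finset.mem_union, hP', Finset.mem_sdiff]
        tauto
      have hBadcard := aux_bad_card G t ht hcn v (hPdeg v hv)
      rw [← hBad] at hBadcard
      calc P.card ≤ (P' ∪ Bad).card := Finset.card_le_card hcover
        _ ≤ P'.card + Bad.card := Finset.card_union_le _ _
        _ ≤ (7 + 15 * (t - 1)) * S'.card + (7 + 15 * (t - 1)) := by omega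
        _ = (7 + 15 * (t - 1)) * (insert v S').card := by
            rw [Finset.card_insert_of_notMem hvS']
            ring

lemma aux_opp {a b c d : V} (hbd : b ≠ d) (h1 : G.Adj a b) (h2 : G.Adj b c)
    (h3 : G.Adj c d) (h4 : G.Adj d a) :
    2 ≤ (G.neighborFinset a ∩ G.neighborFinset c).card := by
  have hsub : ({b, d} : Finset V) ⊆ G.neighborFinset a ∩ G.neighborFinset c := by
    intro z hz
    rcases Finset.mem_insert.mp hz with rfl | hz
    · rw [Finset.mem_inter, SimpleGraph.mem_neighborFinset, SimpleGraph.mem_neighborFinset]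
      exact ⟨h1, h2.symm⟩
    · rw [Finset.mem_singleton] at hz
      subst hz
      rw [Finset.mem_inter, SimpleGraph.mem_neighborFinset, SimpleGraph.mem_neighborFinset]
      exact ⟨h4.symm, h3⟩
  calc 2 = ({b, d} : Finset V).card := (Finset.card_pair hbd).symm
    _ ≤ _ := Finset.card_le_card hsub

end Aux

/-- In a 4-connected planar triangulation with `n` vertices, for any positive integer `t`,
either two distinct vertices have more than `t` common neighbors, or there is an
independent set `S` of vertices of degree at most 6, no 4-cycle containing two vertices of
`S`, with `|S| ≥ n / (108 t)`. -/
theorem fourConnected_triangulation_common_nbrs_or_indep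
    [Fintype V] [DecidableEq V] (G : SimpleGraph V) (n t : ℕ)
    (hn : Fintype.card V = n) (ht : 1 ≤ t)
    (hPT : Nonempty (PlaneTriangulation G)) (h4 : FourConnected G) :
    (∃ v x : V, v ≠ x ∧ t < (G.neighborSet v ∩ G.neighborSet x).ncard) ∨
    (∃ S : Set V, IndepSet G S ∧ (∀ v ∈ S, (G.neighborSet v).ncard ≤ 6) ∧
      (∀ a b c d : V, IsCycle4 G a b c d → (({a, b, c, d} : Set V) ∩ S).ncard ≤ 1) ∧
      n ≤ 108 * t * S.ncard) := by
  classical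
  by_cases hleft : ∃ v x : V, v ≠ x ∧ t < (G.neighborSet v ∩ G.neighborSet x).ncard
  · exact Or.inl hleft
  right
  push_neg at hleft
  have hcn : ∀ v x : V, v ≠ x → (G.neighborFinset v ∩ G.neighborFinset x).card ≤ t := by
    intro v x hvx
    have := hleft v x hvx
    rwa [aux_ncard_inter_nbr] at this
  set P : Finset V := Finset.univ.filter (fun v => G.degree v ≤ 6) with hPdef
  have hPdeg : ∀ v ∈ P, G.degree v ≤ 6 := by
    intro v hv
    rw [hPdef, Finset.mem_filter] at hv
    exact hv.2
  obtain ⟨S, hSP, hSpair, hScard⟩ :=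
    aux_greedy G t ht hcn P.card P le_rfl hPdeg
  have hnP : Fintype.card V ≤ 7 * P.card :=
    aux_low_deg_card G hPT.some (by have := h4.1; omega)
  refine ⟨↑S, ?_, ?_, ?_, ?_⟩
  · intro a ha b hb hab
    exact (hSpair a ha b hb hab).1
  · intro v hv
    rw [aux_ncard_neighborSet]
    exact hPdeg v (hSP hv)
  · intro a b c d hC
    obtain ⟨hnd, h1, h2, h3, h4c⟩ := hC
    simp only [List.nodup_cons, List.mem_cons, List.mem_singleton, List.not_mem_nil,
      or_false, not_or, List.nodup_nil, and_true] at hnd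
    obtain ⟨⟨hab, hac, had⟩, ⟨hbc, hbd⟩, hcd⟩ := hnd
    by_contra hcon
    push_neg at hcon
    have hfin : (({a, b, c, d} : Set V) ∩ ↑S).Finite := Set.toFinite _
    obtain ⟨u, w, hu, hw, huw⟩ := (Set.one_lt_ncard_iff hfin).mp hcon
    obtain ⟨huC, huS⟩ := hu
    obtain ⟨hwC, hwS⟩ := hw
    have hP := hSpair u huS w hwS huw
    have hPcc : (G.neighborFinset u ∩ G.neighborFinset w).card ≤ 1 := hP.2
    have hPcc' : (G.neighborFinset w ∩ G.neighborFinset u).card ≤ 1 := by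
      rw [Finset.inter_comm]; exact hP.2
    simp only [Set.mem_insert_iff, Set.mem_singleton_iff] at huC hwC
    rcases huC with rfl | rfl | rfl | rfl <;> rcases hwC with rfl | rfl | rfl | rfl <;>
      first
        | exact absurd rfl huw
        | exact hP.1 h1 | exact hP.1 h2 | exact hP.1 h3 | exact hP.1 h4c
        | exact hP.1 h1.symm | exact hP.1 h2.symm | exact hP.1 h3.symm
        | exact hP.1 h4c.symm
        | (have := aux_opp G hbd h1 h2 h3 h4c; omega)
        | (have := aux_opp G hbd.symm h3 h4c h1 h2; omega)
        | (have := aux_opp G hac.symm h2 h3 h4c h1; omega)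
        | (have := aux_opp G hac h4c h1 h2 h3; omega)
  · rw [Set.ncard_coe_finset]
    have hmul : 7 * P.card ≤ 7 * ((7 + 15 * (t - 1)) * S.card) :=
      Nat.mul_le_mul_left 7 hScard
    have harith : 7 * ((7 + 15 * (t - 1)) * S.card) ≤ 108 * t * S.card := by
      have h1 : 7 * (7 + 15 * (t - 1)) ≤ 108 * t := by omega
      calc 7 * ((7 + 15 * (t - 1)) * S.card) = (7 * (7 + 15 * (t - 1))) * S.card := by ring
        _ ≤ 108 * t * S.card := Nat.mul_le_mul_right _ h1
    omega
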